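/- arXiv:1806.01374 — 2 statements merged into one kernel-verified Lean document; each statement's English description precedes it below -/
import Mathlib

section
/- For positive reals r, s, d, define V(f) = s·f·(1 − Π₀(r, s·f, d)) for f ∈ [0,1], where Π₀(r,σ,d) = (∑_{l=0}^∞ r^l / ∏_{m=1}^{l} (σ + m·d))^{-1}. Then V(f) < r for all f ∈ [0,1], i.e., the long-run completion-rate (hence revenue rate with unit rewards) from a queue never exceeds its arrival rate. -/
open scoped BigOperators

/-- Term of the normalizing series of the birth-death queue:
`r^l / ∏_{m=1}^{l} (s + m·d)`, empty product = 1. -/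
noncomputable def qterm (r s d : ℝ) (l : ℕ) : ℝ :=
  r ^ l / ∏ m ∈ Finset.Icc 1 l, (s + (m : ℝ) * d)

/-- Stationary empty-queue probability `Π₀(r,s,d)`. -/
noncomputable def Pi0 (r s d : ℝ) : ℝ := (∑' l : ℕ, qterm r s d l)⁻¹

lemma qprod_pos (s d : ℝ) (hs : 0 ≤ s) (hd : 0 < d) (l : ℕ) :
    0 < ∏ m ∈ Finset.Icc 1 l, (s + (m : ℝ) * d) := by
  apply Finset.prod_pos
  intro m hm
  simp only [Finset.mem_Icc] at hm
  have : (1 : ℝ) ≤ (m : ℝ) := by exact_mod_cast hm.1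
  nlinarith

lemma qterm_pos (r s d : ℝ) (hr : 0 < r) (hs : 0 ≤ s) (hd : 0 < d) (l : ℕ) :
    0 < qterm r s d l :=
  div_pos (pow_pos hr l) (qprod_pos s d hs hd l)

lemma qterm_le (r s d : ℝ) (hr : 0 < r) (hs : 0 ≤ s) (hd : 0 < d) (l : ℕ) :
    qterm r s d l ≤ (r / d) ^ l / (Nat.factorial l : ℝ) := by
  have hprod : (Nat.factorial l : ℝ) * d ^ l ≤ ∏ m ∈ Finset.Icc 1 l, (s + (m : ℝ) * d) := by
    have heq : (Nat.factorial l : ℝ) * d ^ l = ∏ m ∈ Finset.Icc 1 l, ((m : ℝ) * d) := by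
      rw [Finset.prod_mul_distrib, Finset.prod_const, Nat.card_Icc,
        Nat.add_sub_cancel, ← Nat.cast_prod]
      congr 1
      rw [← Finset.Ico_add_one_right_eq_Icc, Finset.prod_Ico_id_eq_factorial]
    rw [heq]
    apply Finset.prod_le_prod
    · intro m hm
      simp only [Finset.mem_Icc] at hm
      have : (1:ℝ) ≤ (m:ℝ) := by exact_mod_cast hm.1
      nlinarith
    · intro m _; nlinarith [Nat.cast_nonneg (α := ℝ) m]
  have h1 : (0:ℝ) < (Nat.factorial l : ℝ) * d ^ l := by positivity
  rw [qterm, div_pow, div_div]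
  exact div_le_div_of_nonneg_left (by positivity) (by positivity)
    (le_trans (le_of_eq (by ring)) hprod)

lemma qterm_summable (r s d : ℝ) (hr : 0 < r) (hs : 0 ≤ s) (hd : 0 < d) :
    Summable (qterm r s d) :=
  Summable.of_nonneg_of_le (fun l => (qterm_pos r s d hr hs hd l).le)
    (qterm_le r s d hr hs hd)
    (by simpa [Nat.factorial] using Real.summable_pow_div_factorial (r / d))

lemma qterm_rec (r s d : ℝ) (l : ℕ) (hs : 0 ≤ s) (hd : 0 < d) :
    qterm r s d (l + 1) * (s + ((l : ℝ) + 1) * d) = r * qterm r s d l := by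
  have hne : (s + ((l:ℝ) + 1) * d) ≠ 0 := by positivity
  rw [qterm, qterm, Finset.prod_Icc_succ_top (Nat.le_add_left 1 l)]
  push_cast
  rw [← div_div, div_mul_cancel₀ _ hne, pow_succ, mul_comm (r ^ l) r, mul_div_assoc]

theorem stmt6 (r s d : ℝ) (hr : 0 < r) (hs : 0 < s) (hd : 0 < d) :
    ∀ f ∈ Set.Icc (0 : ℝ) 1, s * f * (1 - Pi0 r (s * f) d) < r := by
  rintro f ⟨hf0, hf1⟩
  rcases eq_or_lt_of_le hf0 with h | h
  · simpa [← h] using hr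
  set σ := s * f with hσdef
  have hσ : 0 < σ := by positivity
  have hsum := qterm_summable r σ d hr hσ.le hd
  set Z := ∑' l : ℕ, qterm r σ d l with hZ
  have hq0 : qterm r σ d 0 = 1 := by simp [qterm]
  have hZ1 : 1 ≤ Z := by
    rw [← hq0]
    exact Summable.le_tsum hsum 0 (fun j _ => (qterm_pos r σ d hr hσ.le hd j).le)
  have hZpos : 0 < Z := lt_of_lt_of_le one_pos hZ1
  -- key strict inequality: σ * (Z - 1) < r * Z
  have hkey : σ * (Z - 1) < r * Z := by
    have hshift : Z = 1 + ∑' l : ℕ, qterm r σ d (l + 1) := by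
      rw [hZ, Summable.tsum_eq_zero_add hsum, hq0]
    have hZm : σ * (Z - 1) = ∑' l : ℕ, σ * qterm r σ d (l + 1) := by
      rw [tsum_mul_left, hshift]; ring
    have hrZ : r * Z = ∑' l : ℕ, r * qterm r σ d l := by
      rw [tsum_mul_left]
    rw [hZm, hrZ]
    apply Summable.tsum_lt_tsum_of_nonneg (i := 0)
    · intro b; exact mul_nonneg hσ.le (qterm_pos r σ d hr hσ.le hd _).le
    · intro b
      have hrec := qterm_rec r σ d b hσ.le hd
      have hqpos := qterm_pos r σ d hr hσ.le hd (b + 1)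
      nlinarith [mul_nonneg hqpos.le (show (0:ℝ) ≤ ((b:ℝ) + 1) * d by positivity)]
    · have hrec := qterm_rec r σ d 0 hσ.le hd
      have hqpos := qterm_pos r σ d hr hσ.le hd 1
      have h01 : σ * qterm r σ d 1 < r * qterm r σ d 0 := by
        nlinarith [mul_pos hqpos hd]
      simpa using h01
    · exact hsum.mul_left r
  have hZne : Z ≠ 0 := ne_of_gt hZpos
  have hPi : σ * (1 - Pi0 r σ d) = σ * (Z - 1) * Z⁻¹ := by
    simp only [Pi0, ← hZ]
    field_simp
  rw [hPi]
  calc σ * (Z - 1) * Z⁻¹ < r * Z * Z⁻¹ :=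
        mul_lt_mul_of_pos_right hkey (inv_pos.mpr hZpos)
    _ = r := by field_simp
end

section
/- For fixed r, d > 0, the function g(σ) = σ·(1 − Π₀(r,σ,d)) is continuous and strictly increasing on [0,∞), with g(0) = 0 and g(σ) < r for all σ, where Π₀(r,σ,d) = (∑_{k=0}^∞ r^k / ∏_{m=1}^{k}(σ + m·d))^{-1}. -/
open scoped BigOperators

namespace Stmt16

lemma prod_Icc_id (l : ℕ) : (∏ m ∈ Finset.Icc 1 l, (m : ℝ)) = (l.factorial : ℝ) := by
  induction l with
  | zero => simp
  | succ n ih =>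
    rw [Finset.prod_Icc_succ_top (Nat.le_add_left 1 n), ih, Nat.factorial_succ]
    push_cast; ring

lemma qden_pos {s d : ℝ} (hs : 0 ≤ s) (hd : 0 < d) (l : ℕ) :
    0 < ∏ m ∈ Finset.Icc 1 l, (s + (m : ℝ) * d) := by
  apply Finset.prod_pos
  intro m hm
  have hm1 : 1 ≤ m := (Finset.mem_Icc.mp hm).1
  have h1 : (1 : ℝ) ≤ (m : ℝ) := by exact_mod_cast hm1
  nlinarith

lemma qterm_pos {r s d : ℝ} (hr : 0 < r) (hs : 0 ≤ s) (hd : 0 < d) (l : ℕ) :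
    0 < qterm r s d l :=
  div_pos (pow_pos hr l) (qden_pos hs hd l)

lemma qterm_zero (r s d : ℝ) : qterm r s d 0 = 1 := by simp [qterm]

lemma qden_ge {s d : ℝ} (hs : 0 ≤ s) (hd : 0 < d) (l : ℕ) :
    d ^ l * (l.factorial : ℝ) ≤ ∏ m ∈ Finset.Icc 1 l, (s + (m : ℝ) * d) := by
  have h1 : ∏ m ∈ Finset.Icc 1 l, ((m : ℝ) * d) ≤ ∏ m ∈ Finset.Icc 1 l, (s + (m : ℝ) * d) := by
    apply Finset.prod_le_prod
    · intro m _; positivity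
    · intro m _; linarith
  calc d ^ l * (l.factorial : ℝ) = (∏ m ∈ Finset.Icc 1 l, (m : ℝ)) * ∏ m ∈ Finset.Icc 1 l, d := by
        rw [prod_Icc_id, Finset.prod_const, Nat.card_Icc]; simp [mul_comm]
    _ = ∏ m ∈ Finset.Icc 1 l, ((m : ℝ) * d) := by rw [← Finset.prod_mul_distrib]
    _ ≤ _ := h1

lemma qterm_le {r s d : ℝ} (hr : 0 < r) (hs : 0 ≤ s) (hd : 0 < d) (l : ℕ) :
    qterm r s d l ≤ (r / d) ^ l / (l.factorial : ℝ) := by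
  have hfac : (0:ℝ) < (l.factorial : ℝ) := by exact_mod_cast l.factorial_pos
  have hden : (0:ℝ) < d ^ l * (l.factorial : ℝ) := by positivity
  have h2 : r ^ l / (∏ m ∈ Finset.Icc 1 l, (s + (m : ℝ) * d)) ≤ r ^ l / (d ^ l * (l.factorial : ℝ)) :=
    div_le_div_of_nonneg_left (le_of_lt (pow_pos hr l)) hden (qden_ge hs hd l)
  calc qterm r s d l ≤ r ^ l / (d ^ l * (l.factorial : ℝ)) := h2
    _ = (r / d) ^ l / (l.factorial : ℝ) := by rw [div_pow, div_div]

lemma summable_qterm {r s d : ℝ} (hr : 0 < r) (hs : 0 ≤ s) (hd : 0 < d) :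
    Summable (qterm r s d) :=
  Summable.of_nonneg_of_le (fun l => (qterm_pos hr hs hd l).le) (qterm_le hr hs hd)
    (Real.summable_pow_div_factorial (r / d))


-- summability of n * x^n / n!
lemma summable_mul_pow_div_factorial (x : ℝ) :
    Summable (fun l : ℕ => (l : ℝ) * (x ^ l / (l.factorial : ℝ))) := by
  have key : (fun l : ℕ => ((l+1 : ℕ) : ℝ) * (x ^ (l+1) / ((l+1).factorial : ℝ)))
      = fun l : ℕ => x * (x ^ l / (l.factorial : ℝ)) := by
    funext l
    have hf : ((l+1).factorial : ℝ) = ((l:ℝ)+1) * (l.factorial : ℝ) := by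
      rw [Nat.factorial_succ]; push_cast; ring
    have hfp : (0:ℝ) < (l.factorial : ℝ) := by exact_mod_cast l.factorial_pos
    rw [hf]
    push_cast
    field_simp
    ring
  have h1 : Summable (fun l : ℕ => ((l+1 : ℕ) : ℝ) * (x ^ (l+1) / ((l+1).factorial : ℝ))) := by
    rw [key]
    exact (Real.summable_pow_div_factorial x).mul_left x
  exact (summable_nat_add_iff 1).mp h1

lemma summable_mul_qterm {r s d : ℝ} (hr : 0 < r) (hs : 0 ≤ s) (hd : 0 < d) :
    Summable (fun l : ℕ => (l : ℝ) * qterm r s d l) := by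
  apply Summable.of_nonneg_of_le
    (fun l => mul_nonneg (Nat.cast_nonneg l) (qterm_pos hr hs hd l).le)
    (fun l => mul_le_mul_of_nonneg_left (qterm_le hr hs hd l) (Nat.cast_nonneg l))
  exact summable_mul_pow_div_factorial (r / d)

noncomputable def Sf (r s d : ℝ) : ℝ := ∑' l : ℕ, qterm r s d l
noncomputable def Nf (r s d : ℝ) : ℝ := ∑' l : ℕ, (l : ℝ) * qterm r s d l

lemma one_le_Sf {r s d : ℝ} (hr : 0 < r) (hs : 0 ≤ s) (hd : 0 < d) : 1 ≤ Sf r s d := by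
  have := Summable.le_tsum (summable_qterm hr hs hd) 0 (fun l _ => (qterm_pos hr hs hd l).le)
  rwa [qterm_zero] at this

lemma Sf_pos {r s d : ℝ} (hr : 0 < r) (hs : 0 ≤ s) (hd : 0 < d) : 0 < Sf r s d :=
  lt_of_lt_of_le one_pos (one_le_Sf hr hs hd)

lemma Nf_pos {r s d : ℝ} (hr : 0 < r) (hs : 0 ≤ s) (hd : 0 < d) : 0 < Nf r s d := by
  have h1 := Summable.le_tsum (summable_mul_qterm hr hs hd) 1
    (fun l _ => mul_nonneg (Nat.cast_nonneg l) (qterm_pos hr hs hd l).le)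
  have : (0:ℝ) < (1 : ℝ) * qterm r s d 1 := by
    rw [one_mul]; exact qterm_pos hr hs hd 1
  calc (0:ℝ) < (1:ℕ) * qterm r s d 1 := by push_cast; linarith
    _ ≤ Nf r s d := h1

lemma qterm_rec {r s d : ℝ} (hs : 0 ≤ s) (hd : 0 < d) (l : ℕ) :
    (s + ((l:ℝ)+1) * d) * qterm r s d (l+1) = r * qterm r s d l := by
  have hP : (0:ℝ) < ∏ m ∈ Finset.Icc 1 l, (s + (m : ℝ) * d) := qden_pos hs hd l
  have hfac : (0:ℝ) < s + ((l:ℝ)+1) * d := by positivity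
  have hprod : ∏ m ∈ Finset.Icc 1 (l+1), (s + (m : ℝ) * d)
      = (∏ m ∈ Finset.Icc 1 l, (s + (m : ℝ) * d)) * (s + ((l:ℝ)+1) * d) := by
    rw [Finset.prod_Icc_succ_top (Nat.le_add_left 1 l)]; push_cast; ring
  unfold qterm
  rw [hprod]
  field_simp
  ring

-- key identity: s * (Sf - 1) = r * Sf - d * Nf
lemma key_identity {r s d : ℝ} (hr : 0 < r) (hs : 0 ≤ s) (hd : 0 < d) :
    s * (Sf r s d - 1) = r * Sf r s d - d * Nf r s d := by
  have hq := summable_qterm hr hs hd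
  have hnq := summable_mul_qterm hr hs hd
  have hq1 : Summable (fun l : ℕ => qterm r s d (l+1)) := (summable_nat_add_iff 1).mpr hq
  have hnq1 : Summable (fun l : ℕ => ((l:ℝ)+1) * qterm r s d (l+1)) := by
    have : Summable (fun l : ℕ => ((l+1:ℕ) : ℝ) * qterm r s d (l+1)) :=
      (summable_nat_add_iff 1).mpr hnq
    simpa using this
  -- ∑' l, r * qterm l = r * Sf
  have e1 : ∑' l : ℕ, r * qterm r s d l = r * Sf r s d := tsum_mul_left
  -- ∑' l, (s + (l+1) d) * qterm (l+1) = s * (Sf - 1) + d * Nf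
  have e2 : ∑' l : ℕ, (s + ((l:ℝ)+1) * d) * qterm r s d (l+1)
      = s * (Sf r s d - 1) + d * Nf r s d := by
    have hsplit : ∀ l : ℕ, (s + ((l:ℝ)+1) * d) * qterm r s d (l+1)
        = s * qterm r s d (l+1) + d * (((l:ℝ)+1) * qterm r s d (l+1)) := by
      intro l; ring
    rw [tsum_congr hsplit, Summable.tsum_add (hq1.mul_left s) (hnq1.mul_left d),
      tsum_mul_left, tsum_mul_left]
    have eS : ∑' l : ℕ, qterm r s d (l+1) = Sf r s d - 1 := by
      have := Summable.tsum_eq_zero_add hq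
      rw [qterm_zero] at this
      unfold Sf; linarith [this]
    have eN : ∑' l : ℕ, ((l:ℝ)+1) * qterm r s d (l+1) = Nf r s d := by
      have := Summable.tsum_eq_zero_add hnq
      simp only [Nat.cast_zero, zero_mul, zero_add] at this
      unfold Nf; rw [this]; push_cast; rfl
    rw [eS, eN]
  have e3 : ∑' l : ℕ, (s + ((l:ℝ)+1) * d) * qterm r s d (l+1) = ∑' l : ℕ, r * qterm r s d l :=
    tsum_congr (fun l => qterm_rec hs hd l)
  have := e3.symm.trans e2
  rw [e1] at this
  linarith



lemma g_formula {r s d : ℝ} (hr : 0 < r) (hs : 0 ≤ s) (hd : 0 < d) :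
    s * (1 - Pi0 r s d) = r - d * (Nf r s d / Sf r s d) := by
  have hS : (0:ℝ) < Sf r s d := Sf_pos hr hs hd
  have hkey := key_identity hr hs hd
  have hPi : Pi0 r s d = (Sf r s d)⁻¹ := rfl
  rw [hPi]
  have hSne : Sf r s d ≠ 0 := ne_of_gt hS
  field_simp
  nlinarith [hkey]

noncomputable def tailf (r s d : ℝ) (k : ℕ) : ℝ := ∑' l : ℕ, qterm r s d (l + k)

lemma summable_shift {r s d : ℝ} (hr : 0 < r) (hs : 0 ≤ s) (hd : 0 < d) (k : ℕ) :
    Summable (fun l : ℕ => qterm r s d (l + k)) :=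
  (summable_nat_add_iff k).mpr (summable_qterm hr hs hd)

lemma tailf_pos {r s d : ℝ} (hr : 0 < r) (hs : 0 ≤ s) (hd : 0 < d) (k : ℕ) :
    0 < tailf r s d k := by
  have h0 := Summable.le_tsum (summable_shift hr hs hd k) 0
    (fun l _ => (qterm_pos hr hs hd (l + k)).le)
  have := qterm_pos hr hs hd (0 + k)
  unfold tailf; linarith

lemma tailf_le {r s d : ℝ} (hr : 0 < r) (hs : 0 ≤ s) (hd : 0 < d) (k : ℕ) :
    tailf r s d k ≤ (∑' l : ℕ, (r/d) ^ l / (l.factorial : ℝ)) * ((r/d) ^ k / (k.factorial : ℝ)) := by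
  have hx : (0:ℝ) < r / d := div_pos hr hd
  have step : ∀ l : ℕ, qterm r s d (l + k)
      ≤ ((r/d) ^ l / (l.factorial : ℝ)) * ((r/d) ^ k / (k.factorial : ℝ)) := by
    intro l
    have h1 := qterm_le hr hs hd (l + k)
    have hdvd : (l.factorial * k.factorial : ℕ) ∣ (l + k).factorial :=
      Nat.factorial_mul_factorial_dvd_factorial_add l k
    have hle : ((l.factorial * k.factorial : ℕ) : ℝ) ≤ ((l + k).factorial : ℝ) := by
      exact_mod_cast Nat.le_of_dvd (l + k).factorial_pos hdvd
    have hlf : (0:ℝ) < (l.factorial : ℝ) := by exact_mod_cast l.factorial_pos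
    have hkf : (0:ℝ) < (k.factorial : ℝ) := by exact_mod_cast k.factorial_pos
    have h2 : (r/d) ^ (l+k) / ((l + k).factorial : ℝ)
        ≤ (r/d) ^ (l+k) / ((l.factorial : ℝ) * (k.factorial : ℝ)) := by
      apply div_le_div_of_nonneg_left (le_of_lt (pow_pos hx _)) (by positivity)
      exact_mod_cast hle
    calc qterm r s d (l + k) ≤ (r/d) ^ (l+k) / ((l + k).factorial : ℝ) := h1
      _ ≤ (r/d) ^ (l+k) / ((l.factorial : ℝ) * (k.factorial : ℝ)) := h2
      _ = ((r/d) ^ l / (l.factorial : ℝ)) * ((r/d) ^ k / (k.factorial : ℝ)) := by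
          rw [pow_add]; field_simp
  calc tailf r s d k ≤ ∑' l : ℕ, ((r/d) ^ l / (l.factorial : ℝ)) * ((r/d) ^ k / (k.factorial : ℝ)) :=
        Summable.tsum_le_tsum step (summable_shift hr hs hd k)
          ((Real.summable_pow_div_factorial (r/d)).mul_right _)
    _ = _ := tsum_mul_right

lemma summable_tailf {r s d : ℝ} (hr : 0 < r) (hs : 0 ≤ s) (hd : 0 < d) :
    Summable (fun k : ℕ => tailf r s d k) := by
  apply Summable.of_nonneg_of_le (fun k => (tailf_pos hr hs hd k).le) (tailf_le hr hs hd)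
  exact (Real.summable_pow_div_factorial (r/d)).mul_left _

lemma Nf_eq_tsum_tailf {r s d : ℝ} (hr : 0 < r) (hs : 0 ≤ s) (hd : 0 < d) :
    Nf r s d = ∑' k : ℕ, tailf r s d (k+1) := by
  set f : ℕ → ℕ → ℝ := fun k l => if k < l then qterm r s d l else 0 with hf
  have hnonneg : ∀ k l, 0 ≤ f k l := by
    intro k l; dsimp [f]; split
    · exact (qterm_pos hr hs hd l).le
    · exact le_rfl
  have hbd : ∀ k l, f k l ≤ qterm r s d l := by
    intro k l; dsimp [f]; split
    · exact le_rfl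
    · exact (qterm_pos hr hs hd l).le
  have hrow : ∀ k, Summable (fun l => f k l) := fun k =>
    Summable.of_nonneg_of_le (hnonneg k) (hbd k) (summable_qterm hr hs hd)
  have hrow_sum : ∀ k, ∑' l, f k l = tailf r s d (k+1) := by
    intro k
    have hsum := Summable.sum_add_tsum_nat_add (k+1) (hrow k)
    have hzero : ∑ i ∈ Finset.range (k+1), f k i = 0 := by
      apply Finset.sum_eq_zero
      intro i hi
      have hik : ¬ k < i := by have := Finset.mem_range.mp hi; omega
      simp [f, hik]
    have hshift : ∀ i : ℕ, f k (i + (k+1)) = qterm r s d (i + (k+1)) := by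
      intro i; have h : k < i + (k+1) := by omega
      simp [f, h]
    rw [hzero, zero_add] at hsum
    rw [← hsum]
    exact tsum_congr hshift
  have hcol_supp : ∀ l : ℕ, ∀ k ∉ Finset.range l, f k l = 0 := by
    intro l k hk
    have : ¬ k < l := by rw [Finset.mem_range] at hk; omega
    simp [f, this]
  have hcol_sum : ∀ l, ∑' k, f k l = (l : ℝ) * qterm r s d l := by
    intro l
    rw [tsum_eq_sum (hcol_supp l)]
    have hc : ∀ k ∈ Finset.range l, f k l = qterm r s d l := by
      intro k hk; rw [Finset.mem_range] at hk; simp [f, hk]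
    rw [Finset.sum_congr rfl hc, Finset.sum_const, Finset.card_range, nsmul_eq_mul]
  have hcol : ∀ l, Summable (fun k => f k l) := fun l =>
    summable_of_ne_finset_zero (hcol_supp l)
  have huncurry : Summable (Function.uncurry f) := by
    rw [show Function.uncurry f = fun p : ℕ × ℕ => f p.1 p.2 from rfl,
      summable_prod_of_nonneg (fun p => hnonneg p.1 p.2)]
    refine ⟨hrow, ?_⟩
    apply Summable.congr ((summable_nat_add_iff 1).mpr (summable_tailf hr hs hd))
    intro k; exact (hrow_sum k).symm
  have hcomm : ∑' l, ∑' k, f k l = ∑' k, ∑' l, f k l := Summable.tsum_comm' huncurry hrow hcol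
  calc Nf r s d = ∑' l, ∑' k, f k l := by
        unfold Nf; exact tsum_congr (fun l => (hcol_sum l).symm)
    _ = ∑' k, ∑' l, f k l := hcomm
    _ = ∑' k, tailf r s d (k+1) := tsum_congr hrow_sum



noncomputable def rho (x y d : ℝ) (l : ℕ) : ℝ :=
  (∏ m ∈ Finset.Icc 1 l, (x + (m:ℝ) * d)) / (∏ m ∈ Finset.Icc 1 l, (y + (m:ℝ) * d))

lemma rho_pos {x y d : ℝ} (hx : 0 ≤ x) (hy : 0 ≤ y) (hd : 0 < d) (l : ℕ) :
    0 < rho x y d l := div_pos (qden_pos hx hd l) (qden_pos hy hd l)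

lemma rho_zero (x y d : ℝ) : rho x y d 0 = 1 := by simp [rho]

lemma qterm_eq_rho_mul {r x y d : ℝ} (hx : 0 ≤ x) (hy : 0 ≤ y) (hd : 0 < d) (l : ℕ) :
    qterm r y d l = rho x y d l * qterm r x d l := by
  have h1 : (∏ m ∈ Finset.Icc 1 l, (x + (m:ℝ) * d)) ≠ 0 := ne_of_gt (qden_pos hx hd l)
  have h2 : (∏ m ∈ Finset.Icc 1 l, (y + (m:ℝ) * d)) ≠ 0 := ne_of_gt (qden_pos hy hd l)
  unfold qterm rho
  rw [eq_comm, div_mul_div_comm, mul_comm (∏ m ∈ Finset.Icc 1 l, (y + (m:ℝ) * d)), mul_div_mul_left _ _ h1]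

lemma rho_strictAnti {x y d : ℝ} (hx : 0 ≤ x) (hy : 0 ≤ y) (hxy : x < y) (hd : 0 < d) :
    StrictAnti (rho x y d) := by
  apply strictAnti_nat_of_succ_lt
  intro l
  have hsucc : rho x y d (l+1) = rho x y d l * ((x + ((l:ℝ)+1) * d) / (y + ((l:ℝ)+1) * d)) := by
    unfold rho
    rw [Finset.prod_Icc_succ_top (Nat.le_add_left 1 l), Finset.prod_Icc_succ_top (Nat.le_add_left 1 l)]
    push_cast
    rw [div_mul_div_comm]
  have hfy : (0:ℝ) < y + ((l:ℝ)+1) * d := by positivity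
  have hfrac : (x + ((l:ℝ)+1) * d) / (y + ((l:ℝ)+1) * d) < 1 := by
    rw [div_lt_one hfy]; linarith
  have hfrac0 : 0 ≤ (x + ((l:ℝ)+1) * d) / (y + ((l:ℝ)+1) * d) := by positivity
  have := rho_pos hx hy hd l
  calc rho x y d (l+1) = rho x y d l * ((x + ((l:ℝ)+1) * d) / (y + ((l:ℝ)+1) * d)) := hsucc
    _ < rho x y d l * 1 := by apply mul_lt_mul_of_pos_left hfrac this
    _ = rho x y d l := mul_one _

lemma rho_le_one {x y d : ℝ} (hx : 0 ≤ x) (hy : 0 ≤ y) (hxy : x < y) (hd : 0 < d) (l : ℕ) :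
    rho x y d l ≤ 1 := by
  rcases Nat.eq_zero_or_pos l with h | h
  · rw [h, rho_zero]
  · rw [← rho_zero x y d]
    exact le_of_lt ((rho_strictAnti hx hy hxy hd) h)

-- tail comparison
lemma tail_le_rho_tail {r x y d : ℝ} (hr : 0 < r) (hx : 0 ≤ x) (hy : 0 ≤ y) (hxy : x < y)
    (hd : 0 < d) (k : ℕ) :
    tailf r y d (k+1) ≤ rho x y d (k+1) * tailf r x d (k+1) := by
  have hanti := rho_strictAnti hx hy hxy hd
  have step : ∀ l : ℕ, qterm r y d (l + (k+1)) ≤ rho x y d (k+1) * qterm r x d (l + (k+1)) := by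
    intro l
    rw [qterm_eq_rho_mul hx hy hd]
    apply mul_le_mul_of_nonneg_right _ (qterm_pos hr hx hd _).le
    exact hanti.antitone (by omega)
  have := Summable.tsum_le_tsum step (summable_shift hr hy hd (k+1))
    ((summable_shift hr hx hd (k+1)).mul_left _)
  calc tailf r y d (k+1) ≤ ∑' l : ℕ, rho x y d (k+1) * qterm r x d (l + (k+1)) := this
    _ = rho x y d (k+1) * tailf r x d (k+1) := tsum_mul_left

noncomputable def headf (r s d : ℝ) (k : ℕ) : ℝ := ∑ l ∈ Finset.range (k+1), qterm r s d l

lemma rho_head_le {r x y d : ℝ} (hr : 0 < r) (hx : 0 ≤ x) (hy : 0 ≤ y) (hxy : x < y)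
    (hd : 0 < d) (k : ℕ) :
    rho x y d (k+1) * headf r x d k ≤ headf r y d k := by
  have hanti := rho_strictAnti hx hy hxy hd
  unfold headf
  rw [Finset.mul_sum]
  apply Finset.sum_le_sum
  intro l hl
  rw [Finset.mem_range] at hl
  rw [qterm_eq_rho_mul hx hy hd]
  apply mul_le_mul_of_nonneg_right _ (qterm_pos hr hx hd _).le
  exact hanti.antitone (by omega)

lemma Sf_split {r s d : ℝ} (hr : 0 < r) (hs : 0 ≤ s) (hd : 0 < d) (k : ℕ) :
    Sf r s d = headf r s d k + tailf r s d (k+1) :=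
  (Summable.sum_add_tsum_nat_add (k+1) (summable_qterm hr hs hd)).symm

lemma headf_pos {r s d : ℝ} (hr : 0 < r) (hs : 0 ≤ s) (hd : 0 < d) (k : ℕ) :
    0 < headf r s d k :=
  Finset.sum_pos (fun l _ => qterm_pos hr hs hd l) ⟨0, Finset.mem_range.mpr (by omega)⟩

lemma ratio_le {r x y d : ℝ} (hr : 0 < r) (hx : 0 ≤ x) (hy : 0 ≤ y) (hxy : x < y)
    (hd : 0 < d) (k : ℕ) :
    tailf r y d (k+1) / Sf r y d ≤ tailf r x d (k+1) / Sf r x d := by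
  have hSy := Sf_pos hr hy hd
  have hSx := Sf_pos hr hx hd
  rw [div_le_div_iff₀ hSy hSx]
  rw [Sf_split hr hx hd k, Sf_split hr hy hd k]
  have h1 := tail_le_rho_tail hr hx hy hxy hd k
  have h2 := rho_head_le hr hx hy hxy hd k
  have htx := tailf_pos hr hx hd (k+1)
  have hty := tailf_pos hr hy hd (k+1)
  have hhx := headf_pos hr hx hd k
  have hhy := headf_pos hr hy hd k
  have hrho := rho_pos hx hy hd (k+1)
  nlinarith [mul_le_mul_of_nonneg_right h1 hhx.le, mul_le_mul_of_nonneg_left h2 htx.le]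

lemma headf_zero {r s d : ℝ} : headf r s d 0 = 1 := by
  simp [headf, qterm_zero]

lemma ratio_lt_zero {r x y d : ℝ} (hr : 0 < r) (hx : 0 ≤ x) (hy : 0 ≤ y) (hxy : x < y)
    (hd : 0 < d) :
    tailf r y d 1 / Sf r y d < tailf r x d 1 / Sf r x d := by
  have hSy := Sf_pos hr hy hd
  have hSx := Sf_pos hr hx hd
  have htx := tailf_pos hr hx hd 1
  have hty := tailf_pos hr hy hd 1
  have h1 := tail_le_rho_tail hr hx hy hxy hd 0
  have hrho1 : rho x y d 1 < 1 := by
    rw [← rho_zero x y d]; exact rho_strictAnti hx hy hxy hd (by omega)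
  have htlt : tailf r y d 1 < tailf r x d 1 := by
    calc tailf r y d 1 ≤ rho x y d 1 * tailf r x d 1 := h1
      _ < 1 * tailf r x d 1 := by apply mul_lt_mul_of_pos_right hrho1 htx
      _ = tailf r x d 1 := one_mul _
  rw [div_lt_div_iff₀ hSy hSx]
  rw [Sf_split hr hx hd 0, Sf_split hr hy hd 0, headf_zero, headf_zero]
  nlinarith

lemma M_lt {r x y d : ℝ} (hr : 0 < r) (hx : 0 ≤ x) (hy : 0 ≤ y) (hxy : x < y) (hd : 0 < d) :
    Nf r y d / Sf r y d < Nf r x d / Sf r x d := by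
  have hsumx : Summable (fun k : ℕ => tailf r x d (k+1) / Sf r x d) :=
    ((summable_nat_add_iff 1).mpr (summable_tailf hr hx hd)).div_const _
  have hsumy : Summable (fun k : ℕ => tailf r y d (k+1) / Sf r y d) :=
    ((summable_nat_add_iff 1).mpr (summable_tailf hr hy hd)).div_const _
  have hlt : ∑' k : ℕ, tailf r y d (k+1) / Sf r y d < ∑' k : ℕ, tailf r x d (k+1) / Sf r x d :=
    Summable.tsum_lt_tsum (fun k => ratio_le hr hx hy hxy hd k) (ratio_lt_zero hr hx hy hxy hd) hsumy hsumx
  have ex : ∑' k : ℕ, tailf r x d (k+1) / Sf r x d = Nf r x d / Sf r x d := by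
    rw [tsum_div_const, ← Nf_eq_tsum_tailf hr hx hd]
  have ey : ∑' k : ℕ, tailf r y d (k+1) / Sf r y d = Nf r y d / Sf r y d := by
    rw [tsum_div_const, ← Nf_eq_tsum_tailf hr hy hd]
  rwa [ex, ey] at hlt



lemma continuousOn_Sf {r d : ℝ} (hr : 0 < r) (hd : 0 < d) :
    ContinuousOn (fun σ : ℝ => Sf r σ d) (Set.Ici 0) := by
  apply continuousOn_tsum (u := fun l : ℕ => (r/d) ^ l / (l.factorial : ℝ))
  · intro l
    apply ContinuousOn.div continuousOn_const
    · apply Continuous.continuousOn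
      apply continuous_finset_prod
      intro m _
      continuity
    · intro σ hσ
      exact ne_of_gt (qden_pos hσ hd l)
  · exact Real.summable_pow_div_factorial (r/d)
  · intro l σ hσ
    rw [Real.norm_eq_abs, abs_of_pos (qterm_pos hr hσ hd l)]
    exact qterm_le hr hσ hd l

lemma continuousOn_g {r d : ℝ} (hr : 0 < r) (hd : 0 < d) :
    ContinuousOn (fun σ : ℝ => σ * (1 - Pi0 r σ d)) (Set.Ici 0) := by
  have hS := continuousOn_Sf hr hd
  have hPi : ∀ σ : ℝ, Pi0 r σ d = (Sf r σ d)⁻¹ := fun σ => rfl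
  simp only [hPi]
  apply ContinuousOn.mul continuousOn_id
  apply ContinuousOn.sub continuousOn_const
  exact hS.inv₀ (fun σ hσ => ne_of_gt (Sf_pos hr hσ hd))

end Stmt16

open Stmt16 in
theorem stmt16 (r d : ℝ) (hr : 0 < r) (hd : 0 < d) :
    ContinuousOn (fun σ : ℝ => σ * (1 - Pi0 r σ d)) (Set.Ici 0) ∧
    StrictMonoOn (fun σ : ℝ => σ * (1 - Pi0 r σ d)) (Set.Ici 0) ∧
    (0 : ℝ) * (1 - Pi0 r 0 d) = 0 ∧
    (∀ σ : ℝ, 0 ≤ σ → σ * (1 - Pi0 r σ d) < r) := by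
  refine ⟨continuousOn_g hr hd, ?_, zero_mul _, ?_⟩
  · intro x hx y hy hxy
    simp only [Set.mem_Ici] at hx hy
    simp only
    rw [g_formula hr hx hd, g_formula hr hy hd]
    have := M_lt hr hx hy hxy hd
    nlinarith
  · intro σ hσ
    rw [g_formula hr hσ hd]
    have h1 : 0 < Nf r σ d / Sf r σ d := div_pos (Nf_pos hr hσ hd) (Sf_pos hr hσ hd)
    nlinarith
end
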